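/- arXiv:2508.11449 — 3 statements merged into one kernel-verified Lean document; each statement's English description precedes it below -/
import Mathlib

section
/- Let φ be a formula in DNF, none of whose conjunctive clauses contains an atom together with its negation, let σ ⊆ sig(φ), and let φ^{-σ} be obtained from φ by deleting from every conjunctive clause all literals whose atom is not in σ. Then φ^{-σ} is logically equivalent to ∃p₁⋯∃pₙ.φ, where p₁,...,pₙ enumerate sig(φ) \ σ. -/
/-- A literal: an atom together with a polarity (`true` = positive). -/
abbrev Lit := ℕ × Bool

/-- Evaluation of a literal. -/
def litEval (v : ℕ → Bool) (ℓ : Lit) : Bool := if ℓ.2 then v ℓ.1 else !(v ℓ.1)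

/-- Evaluation of a conjunctive clause (list of literals, empty = ⊤). -/
def cclauseEval (v : ℕ → Bool) (c : List Lit) : Bool := c.all (litEval v)

/-- Evaluation of a DNF (list of conjunctive clauses, empty = ⊥). -/
def dnfEval (v : ℕ → Bool) (d : List (List Lit)) : Bool := d.any (cclauseEval v)

/-- Signature of a DNF: the set of atoms occurring in it. -/
def dnfSig (d : List (List Lit)) : Finset ℕ := (d.flatten.map Prod.fst).toFinset

/-- `satExistsF ps f v` holds iff some valuation agreeing with `v` except possibly on
the atoms in `ps` satisfies `f`. -/
def satExistsF : List ℕ → ((ℕ → Bool) → Bool) → (ℕ → Bool) → Prop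
  | [], f, v => f v = true
  | p :: ps, f, v => ∃ b : Bool, satExistsF ps f (Function.update v p b)

/-- Delete from every conjunctive clause all literals whose atom is not in `σ`. -/
def dnfDrop (σ : Finset ℕ) (d : List (List Lit)) : List (List Lit) :=
  d.map fun c => c.filter fun ℓ => ℓ.1 ∈ σ

lemma satExistsF_iff (ps : List ℕ) (f : (ℕ → Bool) → Bool) (v : ℕ → Bool) :
    satExistsF ps f v ↔ ∃ w : ℕ → Bool, (∀ q, q ∉ ps → w q = v q) ∧ f w = true := by
  induction ps generalizing v with
  | nil =>
    constructor
    · intro h; exact ⟨v, fun q _ => rfl, h⟩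
    · rintro ⟨w, hw, hf⟩
      have : w = v := funext fun q => hw q (by simp)
      rwa [this] at hf
  | cons p ps ih =>
    simp only [satExistsF, ih]
    constructor
    · rintro ⟨b, w, hw, hf⟩
      refine ⟨w, ?_, hf⟩
      intro q hq
      rw [hw q (fun h => hq (List.mem_cons_of_mem _ h)),
        Function.update_of_ne (fun h => hq (by rw [h]; exact List.mem_cons_self))]
    · rintro ⟨w, hw, hf⟩
      refine ⟨w p, w, ?_, hf⟩
      intro q hq
      by_cases h : q = p
      · subst h; simp
      · rw [Function.update_of_ne h]
        exact hw q (by simp [h]; intro hm; exact hq hm)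

/-- For a DNF `d` without complementary literals in any conjunctive clause,
dropping all literals over atoms outside `σ` yields a formula logically equivalent
to `∃ p₁ ⋯ ∃ pₙ. d`, where `p₁,…,pₙ` enumerate `sig(d) \ σ`. -/
theorem dnf_drop_equiv_exists (d : List (List Lit)) (σ : Finset ℕ)
    (hok : ∀ c ∈ d, ∀ p : ℕ, ¬(((p, true) ∈ c) ∧ ((p, false) ∈ c)))
    (hσ : σ ⊆ dnfSig d)
    (ps : List ℕ) (hps : ps.toFinset = dnfSig d \ σ) :
    ∀ v : ℕ → Bool,
      dnfEval v (dnfDrop σ d) = true ↔ satExistsF ps (fun w => dnfEval w d) v := by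
  intro v
  rw [satExistsF_iff]
  have hmemps : ∀ q : ℕ, q ∈ ps ↔ q ∈ dnfSig d ∧ q ∉ σ := by
    intro q
    rw [← List.mem_toFinset, hps, Finset.mem_sdiff]
  constructor
  · intro h
    simp only [dnfEval, dnfDrop, List.any_eq_true, List.mem_map] at h
    obtain ⟨_, ⟨c, hc, rfl⟩, hsat⟩ := h
    simp only [cclauseEval, List.all_eq_true, List.mem_filter] at hsat
    refine ⟨fun q => if q ∈ ps then decide ((q, true) ∈ c) else v q, ?_, ?_⟩
    · intro q hq; simp [hq]
    · simp only [dnfEval, List.any_eq_true]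
      refine ⟨c, hc, ?_⟩
      simp only [cclauseEval, List.all_eq_true]
      rintro ⟨q, b⟩ hl
      by_cases hqσ : q ∈ σ
      · have hqps : q ∉ ps := fun h => ((hmemps q).1 h).2 hqσ
        have := hsat (q, b) (by simpa using ⟨hl, hqσ⟩)
        simpa [litEval, hqps] using this
      · have hqsig : q ∈ dnfSig d := by
          simp only [dnfSig, List.mem_toFinset, List.mem_map]
          exact ⟨(q, b), List.mem_flatten.2 ⟨c, hc, hl⟩, rfl⟩
        have hqps : q ∈ ps := (hmemps q).2 ⟨hqsig, hqσ⟩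
        cases b with
        | true => simp [litEval, hqps, hl]
        | false =>
          have : (q, true) ∉ c := fun h => hok c hc q ⟨h, hl⟩
          simp [litEval, hqps, this]
  · rintro ⟨w, hw, hf⟩
    simp only [dnfEval, List.any_eq_true] at hf ⊢
    obtain ⟨c, hc, hsat⟩ := hf
    refine ⟨c.filter fun ℓ => ℓ.1 ∈ σ, List.mem_map.2 ⟨c, hc, rfl⟩, ?_⟩
    simp only [cclauseEval, List.all_eq_true, List.mem_filter] at hsat ⊢
    rintro ⟨q, b⟩ hl
    simp only [decide_eq_true_eq] at hl
    have hqps : q ∉ ps := fun h => ((hmemps q).1 h).2 hl.2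
    have := hsat (q, b) hl.1
    simpa [litEval, hw q hqps] using this
end

section
/- Let φ = ⋁ᵢ φᵢ and ψ = ⋁ᵢ' ψᵢ' be DNF formulas with no conjunctive clause containing complementary literals, and suppose φ ∧ ψ is unsatisfiable. Then for every pair (i, i') there exist literals ℓ in φᵢ and ℓ' in ψᵢ' with ℓ ∧ ℓ' unsatisfiable; choosing such a pair for each (i,i') and letting φ_P be the DNF obtained from φ by keeping in each φᵢ only its chosen literals, the formula φ_P is a Craig separator for φ, ψ. -/
/-- The complement of a literal. -/
def complit (ℓ : Lit) : Lit := (ℓ.1, !ℓ.2)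

lemma litEval_complit (v : ℕ → Bool) (ℓ : Lit) :
    litEval v (complit ℓ) = !litEval v ℓ := by
  rcases ℓ with ⟨p, b⟩; cases b <;> simp [litEval, complit]

lemma mem_dnfSig {p : ℕ} {d : List (List Lit)} :
    p ∈ dnfSig d ↔ ∃ c ∈ d, ∃ b, (p, b) ∈ c := by
  simp only [dnfSig, List.mem_toFinset, List.mem_map, List.mem_flatten]
  constructor
  · rintro ⟨⟨q, b⟩, ⟨c, hc, hm⟩, rfl⟩
    exact ⟨c, hc, b, hm⟩
  · rintro ⟨c, hc, b, hm⟩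
    exact ⟨(p, b), ⟨c, hc, hm⟩, rfl⟩

/-- For DNFs `d`, `e` without complementary literals inside any conjunctive clause and
with `d ∧ e` unsatisfiable: each pair of clauses contains a cross-complementary pair of
literals, and for any choice `ch` of such pairs, the DNF `d_P` keeping in each clause of
`d` only its chosen literals is a Craig separator for `d, e`. -/
theorem dnf_separator (d e : List (List Lit))
    (hd : ∀ c ∈ d, ∀ p : ℕ, ¬(((p, true) ∈ c) ∧ ((p, false) ∈ c)))
    (he : ∀ c ∈ e, ∀ p : ℕ, ¬(((p, true) ∈ c) ∧ ((p, false) ∈ c)))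
    (hunsat : ∀ v : ℕ → Bool, ¬(dnfEval v d = true ∧ dnfEval v e = true)) :
    (∀ (i : Fin d.length) (j : Fin e.length),
        ∃ ℓ ∈ d.get i, complit ℓ ∈ e.get j) ∧
    (∀ ch : Fin d.length → Fin e.length → Lit,
      (∀ i j, ch i j ∈ d.get i ∧ complit (ch i j) ∈ e.get j) →
      (∀ v : ℕ → Bool, dnfEval v d = true →
          dnfEval v (List.ofFn fun i => List.ofFn fun j => ch i j) = true) ∧
      (∀ v : ℕ → Bool,
          ¬(dnfEval v (List.ofFn fun i => List.ofFn fun j => ch i j) = true ∧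
            dnfEval v e = true)) ∧
      dnfSig (List.ofFn fun i => List.ofFn fun j => ch i j) ⊆ dnfSig d ∩ dnfSig e) := by
  constructor
  · intro i j
    by_contra hno
    push_neg at hno
    set c := d.get i with hc
    set c' := e.get j with hc'
    have hcd : c ∈ d := List.get_mem d i
    have hce : c' ∈ e := List.get_mem e j
    -- the valuation making both clauses true
    set v : ℕ → Bool := fun p => decide ((p, true) ∈ c ++ c') with hv
    have hcons : ∀ p : ℕ, (p, true) ∈ c ++ c' → (p, false) ∈ c ++ c' → False := by
      intro p h1 h2
      rcases List.mem_append.1 h1 with h1 | h1 <;> rcases List.mem_append.1 h2 with h2 | h2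
      · exact hd c hcd p ⟨h1, h2⟩
      · exact hno (p, true) h1 (by simpa [complit] using h2)
      · exact hno (p, false) h2 (by simpa [complit] using h1)
      · exact he c' hce p ⟨h1, h2⟩
    have hsat : ∀ ℓ ∈ c ++ c', litEval v ℓ = true := by
      rintro ⟨p, b⟩ hm
      cases b
      · simp only [litEval, hv, if_neg Bool.false_ne_true, Bool.not_eq_true',
          decide_eq_false_iff_not, List.mem_append, not_or]
        exact ⟨fun h => hcons p (List.mem_append.2 (Or.inl h)) hm,
          fun h => hcons p (List.mem_append.2 (Or.inr h)) hm⟩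
      · have h := List.mem_append.1 hm
        simp only [litEval, hv]
        rw [if_pos trivial]
        simp only [List.mem_append, decide_eq_true_eq]
        exact h
    have hdv : dnfEval v d = true := by
      simp only [dnfEval, List.any_eq_true]
      refine ⟨c, hcd, ?_⟩
      simp only [cclauseEval, List.all_eq_true]
      exact fun ℓ hℓ => hsat ℓ (List.mem_append.2 (Or.inl hℓ))
    have hev : dnfEval v e = true := by
      simp only [dnfEval, List.any_eq_true]
      refine ⟨c', hce, ?_⟩
      simp only [cclauseEval, List.all_eq_true]
      exact fun ℓ hℓ => hsat ℓ (List.mem_append.2 (Or.inr hℓ))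
    exact hunsat v ⟨hdv, hev⟩
  · intro ch hch
    refine ⟨?_, ?_, ?_⟩
    · intro v hv
      simp only [dnfEval, List.any_eq_true] at hv
      obtain ⟨c, hc, hcv⟩ := hv
      obtain ⟨i, hi⟩ := List.mem_iff_get.1 hc
      simp only [dnfEval, List.any_eq_true]
      refine ⟨List.ofFn fun j => ch i j, List.mem_ofFn.2 ⟨i, rfl⟩, ?_⟩
      simp only [cclauseEval, List.all_eq_true] at hcv ⊢
      intro ℓ hℓ
      obtain ⟨j, rfl⟩ := List.mem_ofFn.1 hℓ
      exact hcv _ (hi ▸ (hch i j).1)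
    · rintro v ⟨h1, h2⟩
      simp only [dnfEval, List.any_eq_true] at h1 h2
      obtain ⟨c, hc, hcv⟩ := h1
      obtain ⟨i, rfl⟩ := List.mem_ofFn.1 hc
      obtain ⟨c', hc', hcv'⟩ := h2
      obtain ⟨j, hj⟩ := List.mem_iff_get.1 hc'
      simp only [cclauseEval, List.all_eq_true] at hcv hcv'
      have h3 : litEval v (ch i j) = true :=
        hcv _ (List.mem_ofFn.2 ⟨j, rfl⟩)
      have h4 : litEval v (complit (ch i j)) = true :=
        hcv' _ (hj ▸ (hch i j).2)
      rw [litEval_complit, h3] at h4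
      simp at h4
    · intro p hp
      obtain ⟨c, hc, b, hm⟩ := mem_dnfSig.1 hp
      obtain ⟨i, rfl⟩ := List.mem_ofFn.1 hc
      obtain ⟨j, hj⟩ := List.mem_ofFn.1 hm
      have h1 := (hch i j).1
      have h2 := (hch i j).2
      have hp1 : (ch i j).1 = p := by simpa using congrArg Prod.fst hj
      refine Finset.mem_inter.2 ⟨mem_dnfSig.2 ⟨d.get i, List.get_mem d i, (ch i j).2, ?_⟩,
        mem_dnfSig.2 ⟨e.get j, List.get_mem e j, !(ch i j).2, ?_⟩⟩
      · rw [← hp1]; exact h1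
      · rw [← hp1]; exact h2
end

section
/- Let Φ be a set of clauses and p an atom. Let Ψ be the set of clauses obtained from Φ by adding all resolvents upon p of clauses in Φ and then removing all clauses containing p or ¬p. Then the conjunction of Ψ is logically equivalent to ∃p.Φ. -/
/-- A clause (finite set of literals, read disjunctively) is satisfied by `v`. -/
def clauseSat (v : ℕ → Bool) (C : Finset Lit) : Prop := ∃ ℓ ∈ C, litEval v ℓ = true

/-- A clause set (read conjunctively) is satisfied by `v`. -/
def cnfSat (v : ℕ → Bool) (Φ : Finset (Finset Lit)) : Prop := ∀ C ∈ Φ, clauseSat v C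

lemma litEval_update (v : ℕ → Bool) (p : ℕ) (b : Bool) (ℓ : Lit) (h : ℓ.1 ≠ p) :
    litEval (Function.update v p b) ℓ = litEval v ℓ := by
  simp [litEval, Function.update_of_ne h]

lemma atom_ne (ℓ : Lit) (p : ℕ) (h1 : ℓ ≠ (p, true)) (h2 : ℓ ≠ (p, false)) : ℓ.1 ≠ p := by
  intro h
  cases hb : ℓ.2
  · exact h2 (Prod.ext h hb)
  · exact h1 (Prod.ext h hb)

/-- Adding to `Φ` all resolvents upon `p` and then removing all clauses containing
`p` or `¬p` yields a clause set logically equivalent to `∃p.Φ`. -/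
theorem resolution_eliminates_atom (Φ : Finset (Finset Lit)) (p : ℕ) :
    ∀ v : ℕ → Bool,
      cnfSat v
        ((Φ ∪ ((Φ.filter fun C => (p, true) ∈ C) ×ˢ
               (Φ.filter fun C => (p, false) ∈ C)).image
                 fun q => q.1.erase (p, true) ∪ q.2.erase (p, false)).filter
          fun C => (p, true) ∉ C ∧ (p, false) ∉ C)
      ↔ ∃ b : Bool, cnfSat (Function.update v p b) Φ := by
  intro v
  constructor
  · intro hΨ
    by_cases hA : ∀ C ∈ Φ, (p, false) ∈ C → (p, true) ∉ C → clauseSat v (C.erase (p, false))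
    · refine ⟨true, fun C hC => ?_⟩
      by_cases ht : (p, true) ∈ C
      · exact ⟨(p, true), ht, by simp [litEval]⟩
      by_cases hf : (p, false) ∈ C
      · obtain ⟨ℓ, hℓ, hev⟩ := hA C hC hf ht
        have hne := Finset.ne_of_mem_erase hℓ
        have hmem := Finset.mem_of_mem_erase hℓ
        have h1 : ℓ ≠ (p, true) := fun h => ht (h ▸ hmem)
        exact ⟨ℓ, hmem, by rw [litEval_update _ _ _ _ (atom_ne ℓ p h1 hne)]; exact hev⟩
      · obtain ⟨ℓ, hℓ, hev⟩ := hΨ C (Finset.mem_filter.mpr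
          ⟨Finset.mem_union_left _ hC, ht, hf⟩)
        exact ⟨ℓ, hℓ, by
          rw [litEval_update _ _ _ _ (atom_ne ℓ p (fun h => ht (h ▸ hℓ))
            (fun h => hf (h ▸ hℓ)))]; exact hev⟩
    · push_neg at hA
      obtain ⟨C₂, hC₂, hf₂, ht₂, hns⟩ := hA
      refine ⟨false, fun C hC => ?_⟩
      by_cases hf : (p, false) ∈ C
      · exact ⟨(p, false), hf, by simp [litEval]⟩
      by_cases ht : (p, true) ∈ C
      · have hRmem : C.erase (p, true) ∪ C₂.erase (p, false) ∈
            ((Φ.filter fun C => (p, true) ∈ C) ×ˢ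
               (Φ.filter fun C => (p, false) ∈ C)).image
                 (fun q => q.1.erase (p, true) ∪ q.2.erase (p, false)) :=
          Finset.mem_image.mpr ⟨(C, C₂), Finset.mem_product.mpr
            ⟨Finset.mem_filter.mpr ⟨hC, ht⟩, Finset.mem_filter.mpr ⟨hC₂, hf₂⟩⟩, rfl⟩
        have hRt : (p, true) ∉ C.erase (p, true) ∪ C₂.erase (p, false) := by
          simp only [Finset.mem_union, Finset.mem_erase]
          rintro (⟨h, -⟩ | ⟨-, h⟩)
          · exact h rfl
          · exact ht₂ h
        have hRf : (p, false) ∉ C.erase (p, true) ∪ C₂.erase (p, false) := by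
          simp only [Finset.mem_union, Finset.mem_erase]
          rintro (⟨-, h⟩ | ⟨h, -⟩)
          · exact hf h
          · exact h rfl
        obtain ⟨ℓ, hℓ, hev⟩ := hΨ _ (Finset.mem_filter.mpr
          ⟨Finset.mem_union_right _ hRmem, hRt, hRf⟩)
        have hℓ1 : ℓ ≠ (p, true) := fun h => hRt (h ▸ hℓ)
        have hℓ2 : ℓ ≠ (p, false) := fun h => hRf (h ▸ hℓ)
        rcases Finset.mem_union.mp hℓ with h | h
        · exact ⟨ℓ, Finset.mem_of_mem_erase h, by
            rw [litEval_update _ _ _ _ (atom_ne ℓ p hℓ1 hℓ2)]; exact hev⟩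
        · exact absurd ⟨ℓ, h, hev⟩ hns
      · obtain ⟨ℓ, hℓ, hev⟩ := hΨ C (Finset.mem_filter.mpr
          ⟨Finset.mem_union_left _ hC, ht, hf⟩)
        exact ⟨ℓ, hℓ, by
          rw [litEval_update _ _ _ _ (atom_ne ℓ p (fun h => ht (h ▸ hℓ))
            (fun h => hf (h ▸ hℓ)))]; exact hev⟩
  · rintro ⟨b, hb⟩ C hC
    obtain ⟨hCmem, hCt, hCf⟩ := Finset.mem_filter.mp hC
    have pfree : ∀ ℓ ∈ C, ℓ.1 ≠ p := fun ℓ hℓ =>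
      atom_ne ℓ p (fun h => hCt (h ▸ hℓ)) (fun h => hCf (h ▸ hℓ))
    rcases Finset.mem_union.mp hCmem with h | h
    · obtain ⟨ℓ, hℓ, hev⟩ := hb C h
      exact ⟨ℓ, hℓ, by rw [← litEval_update v p b ℓ (pfree ℓ hℓ)]; exact hev⟩
    · obtain ⟨⟨C₁, C₂⟩, hq, hEq⟩ := Finset.mem_image.mp h
      obtain ⟨h1, h2⟩ := Finset.mem_product.mp hq
      obtain ⟨hC₁, ht₁⟩ := Finset.mem_filter.mp h1
      obtain ⟨hC₂, hf₂⟩ := Finset.mem_filter.mp h2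
      cases b with
      | true =>
        obtain ⟨ℓ, hℓ, hev⟩ := hb C₂ hC₂
        have hℓf : ℓ ≠ (p, false) := by
          rintro rfl
          simp [litEval] at hev
        have hℓC : ℓ ∈ C := hEq ▸ Finset.mem_union_right _ (Finset.mem_erase.mpr ⟨hℓf, hℓ⟩)
        exact ⟨ℓ, hℓC, by rw [← litEval_update v p true ℓ (pfree ℓ hℓC)]; exact hev⟩
      | false =>
        obtain ⟨ℓ, hℓ, hev⟩ := hb C₁ hC₁
        have hℓt : ℓ ≠ (p, true) := by
          rintro rfl
          simp [litEval] at hev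
        have hℓC : ℓ ∈ C := hEq ▸ Finset.mem_union_left _ (Finset.mem_erase.mpr ⟨hℓt, hℓ⟩)
        exact ⟨ℓ, hℓC, by rw [← litEval_update v p false ℓ (pfree ℓ hℓC)]; exact hev⟩
end
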